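/- Hierarchy block-encoding composition: let A be a 2^{m+n} x 2^{m+n} matrix partitioned into 2^m x 2^m blocks A_{I,I'} each of size 2^n x 2^n. Suppose U_L and U_R^dagger form a block-encoding pair for the matrix of block Frobenius norms (|A_{I,I'}|_F), and each U_{I,I'} is a (|A_{I,I'}|_F, a, 0)-block-encoding of A_{I,I'}. Then the composite unitary U_A = (U_R^dagger ⊗ I)(prod_{I,I'} C_{I,I'}-U_{I,I'})(U_L ⊗ I), where C_{I,I'}-U_{I,I'} applies U_{I,I'} controlled on the index registers being |I,I'>, is a (|A|_F, m+a+1, 0)-block-encoding of A, i.e. <0|^{⊗(m+1)} <I'| <0|^{⊗a} <J'| U_A |0>^{⊗(m+1)} |I> |0>^{⊗a} |J> = A_{I,I';J,J'} / |A|_F. -/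

import Mathlib

open scoped Kronecker

/-- Frobenius norm of a complex matrix. -/
noncomputable def frob {ι κ' : Type*} [Fintype ι] [Fintype κ'] (M : Matrix ι κ' ℂ) : ℝ :=
  Real.sqrt (∑ i, ∑ j, ‖M i j‖ ^ 2)

/-- Frobenius norm `|A_{I,I'}|_F` of the `(I, I')` block of a
`2^m·2^n × 2^m·2^n` matrix, where `A_{I,I';J,J'} = A (I,J) (I',J')`. -/
noncomputable def blockNorm (m n : ℕ)
    (A : Matrix (Fin (2 ^ m) × Fin (2 ^ n)) (Fin (2 ^ m) × Fin (2 ^ n)) ℂ)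
    (I I' : Fin (2 ^ m)) : ℝ :=
  frob (Matrix.of fun J J' : Fin (2 ^ n) => A (I, J) (I', J'))

/-- Column norm `|A_{I'}|_F = sqrt (∑_I |A_{I,I'}|_F²)`. -/
noncomputable def colNorm (m n : ℕ)
    (A : Matrix (Fin (2 ^ m) × Fin (2 ^ n)) (Fin (2 ^ m) × Fin (2 ^ n)) ℂ)
    (I' : Fin (2 ^ m)) : ℝ :=
  Real.sqrt (∑ I, blockNorm m n A I I' ^ 2)

lemma frob_eq_zero_entries {ι κ' : Type*} [Fintype ι] [Fintype κ'] (M : Matrix ι κ' ℂ)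
    (h : frob M = 0) : ∀ i j, M i j = 0 := by
  intro i j
  have hsum : ∑ i, ∑ j, ‖M i j‖ ^ 2 = 0 := by
    have h' := Real.sqrt_eq_zero'.mp h
    exact le_antisymm h' (Finset.sum_nonneg fun _ _ => Finset.sum_nonneg fun _ _ => sq_nonneg _)
  have h1 : ∀ i ∈ Finset.univ, ∑ j, ‖M i j‖ ^ 2 = 0 := by
    intro i _
    exact (Finset.sum_eq_zero_iff_of_nonneg (fun _ _ =>
      Finset.sum_nonneg fun _ _ => sq_nonneg _)).mp hsum i (Finset.mem_univ i)
  have h2 := (Finset.sum_eq_zero_iff_of_nonneg (fun _ _ => sq_nonneg _)).mp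
    (h1 i (Finset.mem_univ i)) j (Finset.mem_univ j)
  have := pow_eq_zero_iff (n := 2) (by norm_num) |>.mp h2
  simpa using this

lemma blockNorm_zero_entries (m n : ℕ)
    (A : Matrix (Fin (2 ^ m) × Fin (2 ^ n)) (Fin (2 ^ m) × Fin (2 ^ n)) ℂ)
    (I I' : Fin (2 ^ m)) (h : blockNorm m n A I I' = 0) :
    ∀ J J', A (I, J) (I', J') = 0 := by
  intro J J'
  exact frob_eq_zero_entries _ h J J'

lemma colNorm_zero_block (m n : ℕ)
    (A : Matrix (Fin (2 ^ m) × Fin (2 ^ n)) (Fin (2 ^ m) × Fin (2 ^ n)) ℂ)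
    (I' : Fin (2 ^ m)) (h : colNorm m n A I' = 0) :
    ∀ I, blockNorm m n A I I' = 0 := by
  intro I
  have hsum : ∑ I, blockNorm m n A I I' ^ 2 = 0 := by
    have h' := Real.sqrt_eq_zero'.mp h
    exact le_antisymm h' (Finset.sum_nonneg fun _ _ => sq_nonneg _)
  have h2 := (Finset.sum_eq_zero_iff_of_nonneg (fun _ _ => sq_nonneg _)).mp
    hsum I (Finset.mem_univ I)
  exact pow_eq_zero_iff (n := 2) (by norm_num) |>.mp h2

lemma frob_zero_blockNorm (m n : ℕ)
    (A : Matrix (Fin (2 ^ m) × Fin (2 ^ n)) (Fin (2 ^ m) × Fin (2 ^ n)) ℂ)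
    (h : frob A = 0) : ∀ I I', blockNorm m n A I I' = 0 := by
  intro I I'
  have hz := frob_eq_zero_entries _ h
  unfold blockNorm frob
  simp only [Matrix.of_apply, hz, map_zero]
  simp

/-- Hierarchy block-encoding composition.  `A` is a `2^{m+n} × 2^{m+n}` matrix partitioned
into `2^m × 2^m` blocks `A_{I,I'}` of size `2^n × 2^n`.  `U_L` and `U_R†` form a
block-encoding pair for the matrix of block Frobenius norms:
`U_L |0,0,I⟩ = |I,0⟩ ∑_{I'} (|A_{I'}|_F/|A|_F)|I'⟩` and the `⟨0,0,·|` components of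
`U_R† |I,0,I'⟩` are `(|A_{I,I'}|_F/|A_{I'}|_F)|0,0,I'⟩` (hypotheses `hUL`, `hUR`); and each
`U I I'` is a `(|A_{I,I'}|_F, a, 0)`-block-encoding of `A_{I,I'}` (hypothesis `hUe`).
Then the composite `U_A = (U_R† ⊗ I)(∏_{I,I'} C_{I,I'}-U_{I,I'})(U_L ⊗ I)` — where the
product of controlled gates applies `U I I'` when the two index registers read `(I, I')`,
written below as a single controlled-select matrix — is a `(|A|_F, m+a+1, 0)`-block-encoding
of `A`: `⟨0^{m+1}, I', 0^a, J'| U_A |0^{m+1}, I, 0^a, J⟩ = A_{I,I';J,J'} / |A|_F`. -/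
theorem hierarchy_block_encoding (m n a : ℕ)
    (A : Matrix (Fin (2 ^ m) × Fin (2 ^ n)) (Fin (2 ^ m) × Fin (2 ^ n)) ℂ)
    (U : Fin (2 ^ m) → Fin (2 ^ m) →
      Matrix (Fin (2 ^ a) × Fin (2 ^ n)) (Fin (2 ^ a) × Fin (2 ^ n)) ℂ)
    (UL UR : Matrix (Fin (2 ^ m) × Fin 2 × Fin (2 ^ m)) (Fin (2 ^ m) × Fin 2 × Fin (2 ^ m)) ℂ)
    (hULu : UL ∈ Matrix.unitaryGroup (Fin (2 ^ m) × Fin 2 × Fin (2 ^ m)) ℂ)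
    (hURu : UR ∈ Matrix.unitaryGroup (Fin (2 ^ m) × Fin 2 × Fin (2 ^ m)) ℂ)
    (hUu : ∀ I I', U I I' ∈ Matrix.unitaryGroup (Fin (2 ^ a) × Fin (2 ^ n)) ℂ)
    (hUL : ∀ (I p : Fin (2 ^ m)) (q : Fin 2) (r : Fin (2 ^ m)),
      UL (p, q, r) (0, 0, I)
        = if p = I ∧ q = 0 then ((colNorm m n A r / frob A : ℝ) : ℂ) else 0)
    (hUR : ∀ I I' K : Fin (2 ^ m),
      UR.conjTranspose (0, 0, K) (I, 0, I')
        = if K = I' then ((blockNorm m n A I I' / colNorm m n A I' : ℝ) : ℂ) else 0)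
    (hUe : ∀ (I I' : Fin (2 ^ m)) (J J' : Fin (2 ^ n)),
      (U I I') ((0 : Fin (2 ^ a)), J') ((0 : Fin (2 ^ a)), J)
        = A (I, J) (I', J') / ((blockNorm m n A I I' : ℝ) : ℂ)) :
    ∀ (I I' : Fin (2 ^ m)) (J J' : Fin (2 ^ n)),
      ((UR.conjTranspose ⊗ₖ (1 : Matrix (Fin (2 ^ a) × Fin (2 ^ n)) (Fin (2 ^ a) × Fin (2 ^ n)) ℂ)) *
          (Matrix.of fun p q :
              (Fin (2 ^ m) × Fin 2 × Fin (2 ^ m)) × (Fin (2 ^ a) × Fin (2 ^ n)) =>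
            if p.1 = q.1 then U p.1.1 p.1.2.2 p.2 q.2 else 0) *
          (UL ⊗ₖ (1 : Matrix (Fin (2 ^ a) × Fin (2 ^ n)) (Fin (2 ^ a) × Fin (2 ^ n)) ℂ)))
        ((0, 0, I'), ((0 : Fin (2 ^ a)), J')) ((0, 0, I), ((0 : Fin (2 ^ a)), J))
        = A (I, J) (I', J') / ((frob A : ℝ) : ℂ) := by
  intro I I' J J'
  rw [Matrix.mul_apply]
  rw [Finset.sum_eq_single (((I, (0 : Fin 2), I'), ((0 : Fin (2 ^ a)), J)) :
      (Fin (2 ^ m) × Fin 2 × Fin (2 ^ m)) × (Fin (2 ^ a) × Fin (2 ^ n)))]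
  · rw [Matrix.mul_apply]
    rw [Finset.sum_eq_single (((I, (0 : Fin 2), I'), ((0 : Fin (2 ^ a)), J')) :
        (Fin (2 ^ m) × Fin 2 × Fin (2 ^ m)) × (Fin (2 ^ a) × Fin (2 ^ n)))]
    · simp only [Matrix.kroneckerMap_apply, Matrix.of_apply, Matrix.one_apply_eq, if_pos rfl,
        hUR I I' I', hUL I I (0 : Fin 2) I', hUe I I' J J', if_pos (And.intro rfl rfl),
        if_pos (rfl : I' = I'), mul_one]
      by_cases hb : blockNorm m n A I I' = 0
      · have hA := blockNorm_zero_entries m n A I I' hb J J'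
        simp [hb, hA]
      · have hc : colNorm m n A I' ≠ 0 := fun hc => hb (colNorm_zero_block m n A I' hc I)
        have hf : frob A ≠ 0 := fun hf => hb (frob_zero_blockNorm m n A hf I I')
        have hb' : ((blockNorm m n A I I' : ℝ) : ℂ) ≠ 0 := by exact_mod_cast hb
        have hc' : ((colNorm m n A I' : ℝ) : ℂ) ≠ 0 := by exact_mod_cast hc
        have hf' : ((frob A : ℝ) : ℂ) ≠ 0 := by exact_mod_cast hf
        simp only [eq_self_iff_true, and_self, if_true]
        push_cast
        field_simp
    · -- other k terms vanish
      rintro ⟨⟨p, q, r⟩, y⟩ _ hk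
      simp only [Matrix.kroneckerMap_apply, Matrix.of_apply]
      by_cases h1 : ((p, q, r) : Fin (2 ^ m) × Fin 2 × Fin (2 ^ m)) = (I, (0 : Fin 2), I')
      · have hy : y ≠ ((0 : Fin (2 ^ a)), J') := by
          intro hy; exact hk (by rw [h1, hy])
        rw [Matrix.one_apply_ne (Ne.symm hy)]
        ring
      · rw [if_neg h1]
        ring
    · intro h; exact absurd (Finset.mem_univ _) h
  · -- other j terms vanish
    rintro ⟨⟨p, q, r⟩, y⟩ _ hj
    simp only [Matrix.kroneckerMap_apply, Matrix.of_apply]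
    by_cases hy : y = ((0 : Fin (2 ^ a)), J)
    · by_cases hpq : p = I ∧ q = 0
      · -- then necessarily r ≠ I'; inner sum vanishes via hUR
        obtain ⟨hp, hq⟩ := hpq
        have hr : r ≠ I' := by
          intro hr
          exact hj (by rw [hp, hq, hr, hy])
        rw [Matrix.mul_apply]
        rw [Finset.sum_eq_zero]
        · ring
        · rintro ⟨⟨p', q', r'⟩, y'⟩ _
          simp only [Matrix.kroneckerMap_apply, Matrix.of_apply]
          by_cases h1 : ((p', q', r') : Fin (2 ^ m) × Fin 2 × Fin (2 ^ m)) = (p, q, r)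
          · by_cases hy' : y' = ((0 : Fin (2 ^ a)), J')
            · rw [h1, hy', hp, hq, hUR I r I', if_neg (fun h => hr h.symm)]
              ring
            · rw [Matrix.one_apply_ne fun h => hy' h.symm]
              ring
          · rw [if_neg h1]
            ring
      · rw [hUL I p q r, if_neg hpq]
        ring
    · simp [Matrix.one_apply, hy]
  · intro h; exact absurd (Finset.mem_univ _) h
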